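/- arXiv:1112.2065 — 5 statements merged into one kernel-verified Lean document; each statement's English description precedes it below -/
import Mathlib

section
/- Let ≺ be a total ordering on the set M of monomials of P such that (i) 1 ⪯ m for all m ∈ M and (ii) m ≺ n implies tm ≺ tn for all m, n, t ∈ M. Then ≺ is a well-ordering of M (hence a monomial ordering of P) if and only if the restriction of ≺ to the variable set X(Σ) = {x(σ) : x ∈ X, σ ∈ Σ} is a well-ordering. -/
/- Common setup: the monoid Σ = ⟨σ₁,…,σ_r⟩ ≅ (ℕ^r,+) is modelled additively as
`Fin r → ℕ`; the algebra of partial difference polynomials `P = K[X(Σ)]` is the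
polynomial ring `MvPolynomial (X × (Fin r → ℕ)) K`, and its monomials are elements
of `(X × (Fin r → ℕ)) →₀ ℕ`. -/

noncomputable section

/-- The total degree `deg : Σ → ℕ` of an element of the monoid `Σ ≅ ℕ^r`. -/
def degS {r : ℕ} (σ : Fin r → ℕ) : ℕ := ∑ i, σ i

/-- The shift action of `σ ∈ Σ` on monomials: `σ · ∏ xᵢ(τᵢ)^{aᵢ} = ∏ xᵢ(στᵢ)^{aᵢ}`. -/
def shiftMon {V : Type*} {r : ℕ} (σ : Fin r → ℕ) (m : (V × (Fin r → ℕ)) →₀ ℕ) :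
    (V × (Fin r → ℕ)) →₀ ℕ :=
  Finsupp.mapDomain (fun p => (p.1, σ + p.2)) m

/-- The shift action of `σ ∈ Σ` on `P` by `K`-algebra endomorphisms,
determined by `σ · x(τ) = x(στ)`. -/
def shiftPoly (K : Type*) [CommSemiring K] {V : Type*} {r : ℕ} (σ : Fin r → ℕ) :
    MvPolynomial (V × (Fin r → ℕ)) K →ₐ[K] MvPolynomial (V × (Fin r → ℕ)) K :=
  MvPolynomial.rename (fun p => (p.1, σ + p.2))

/-- The orbit set `Σ · G` of a set of polynomials `G`. -/
def shiftSet (K : Type*) [CommSemiring K] {V : Type*} {r : ℕ}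
    (G : Set (MvPolynomial (V × (Fin r → ℕ)) K)) :
    Set (MvPolynomial (V × (Fin r → ℕ)) K) :=
  {p | ∃ (σ : Fin r → ℕ) (g : MvPolynomial (V × (Fin r → ℕ)) K), g ∈ G ∧ p = shiftPoly K σ g}

/-- The least common multiple of two monomials (pointwise maximum of exponents). -/
def lcmMon {V : Type*} {r : ℕ} (m n : (V × (Fin r → ℕ)) →₀ ℕ) : (V × (Fin r → ℕ)) →₀ ℕ :=
  Finsupp.zipWith max (max_self 0) m n

/-- The greatest common divisor of two monomials (pointwise minimum of exponents). -/
def gcdMon {V : Type*} {r : ℕ} (m n : (V × (Fin r → ℕ)) →₀ ℕ) : (V × (Fin r → ℕ)) →₀ ℕ :=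
  Finsupp.zipWith min (min_self 0) m n

/-- The strict relation of a linear order given as a term. -/
def oLT {α : Type*} (lo : LinearOrder α) (a b : α) : Prop := lo.lt a b

/-- The non-strict relation of a linear order given as a term. -/
def oLE {α : Type*} (lo : LinearOrder α) (a b : α) : Prop := lo.le a b

/-- `lo` is a *monomial ordering* of an additive (monomial) monoid: a linear order
which is a well-order, has the monomial `1` (written additively: `0`) as least
element, and is compatible with multiplication (written additively). -/
structure IsMonOrd {α : Type*} [AddCommMonoid α] (lo : LinearOrder α) : Prop where
  wf : WellFounded (oLT lo)
  zero_le : ∀ a : α, oLE lo 0 a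
  add_lt : ∀ a b c : α, oLT lo a b → oLT lo (c + a) (c + b)

/-- The leading monomial of a polynomial with respect to a monomial ordering
(junk value `1`, i.e. `0`, on the zero polynomial). -/
def lmo {K V : Type*} [CommSemiring K] {r : ℕ} (lo : LinearOrder ((V × (Fin r → ℕ)) →₀ ℕ))
    (f : MvPolynomial (V × (Fin r → ℕ)) K) : (V × (Fin r → ℕ)) →₀ ℕ :=
  haveI : Decidable (f = 0) := Classical.dec _
  if h : f = 0 then 0
  else @Finset.max' _ lo f.support
    (Finset.nonempty_iff_ne_empty.2 fun he => h (MvPolynomial.support_eq_empty.mp he))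

/-- The leading coefficient of a polynomial. -/
def lco {K V : Type*} [CommSemiring K] {r : ℕ} (lo : LinearOrder ((V × (Fin r → ℕ)) →₀ ℕ))
    (f : MvPolynomial (V × (Fin r → ℕ)) K) : K :=
  MvPolynomial.coeff (lmo lo f) f

/-- The S-polynomial `spoly(f,g) = (l/lt(f))·f − (l/lt(g))·g`, where
`l = lcm(lm f, lm g)`. -/
def spoly {K V : Type*} [Field K] {r : ℕ} (lo : LinearOrder ((V × (Fin r → ℕ)) →₀ ℕ))
    (f g : MvPolynomial (V × (Fin r → ℕ)) K) : MvPolynomial (V × (Fin r → ℕ)) K :=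
  MvPolynomial.monomial (lcmMon (lmo lo f) (lmo lo g) - lmo lo f) (lco lo f)⁻¹ * f -
  MvPolynomial.monomial (lcmMon (lmo lo f) (lmo lo g) - lmo lo g) (lco lo g)⁻¹ * g

/-- `f` has a Gröbner representation `f = ∑ qᵢ gᵢ` with respect to `G`:
`gᵢ ∈ G` and `lm(f) ⪰ lm(qᵢ)·lm(gᵢ)` for all (nontrivial) `i`. -/
def HasGroebnerRep {K V : Type*} [Field K] {r : ℕ}
    (lo : LinearOrder ((V × (Fin r → ℕ)) →₀ ℕ))
    (G : Set (MvPolynomial (V × (Fin r → ℕ)) K))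
    (f : MvPolynomial (V × (Fin r → ℕ)) K) : Prop :=
  ∃ (n : ℕ) (q g : Fin n → MvPolynomial (V × (Fin r → ℕ)) K),
    (∀ i, g i ∈ G) ∧ f = ∑ i, q i * g i ∧
    ∀ i, q i ≠ 0 → g i ≠ 0 → oLE lo (lmo lo (q i) + lmo lo (g i)) (lmo lo f)

/-- The ideal `LM(S)` generated by the leading monomials of the nonzero elements
of `S`. -/
def lmIdeal {K V : Type*} [Field K] {r : ℕ} (lo : LinearOrder ((V × (Fin r → ℕ)) →₀ ℕ))
    (S : Set (MvPolynomial (V × (Fin r → ℕ)) K)) : Ideal (MvPolynomial (V × (Fin r → ℕ)) K) :=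
  Ideal.span ((fun g => (MvPolynomial.monomial (lmo lo g) (1 : K))) '' {g | g ∈ S ∧ g ≠ 0})

/-- `G ⊆ I` is a Gröbner basis of `I`: `LM(I)` is generated by `lm(G)`. -/
def IsGBasis {K V : Type*} [Field K] {r : ℕ} (lo : LinearOrder ((V × (Fin r → ℕ)) →₀ ℕ))
    (G : Set (MvPolynomial (V × (Fin r → ℕ)) K))
    (I : Ideal (MvPolynomial (V × (Fin r → ℕ)) K)) : Prop :=
  G ⊆ ↑I ∧ lmIdeal lo (I : Set (MvPolynomial (V × (Fin r → ℕ)) K)) = lmIdeal lo G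

/-- `G ⊆ I` is a Gröbner Σ-basis of `I`: `LM(I)` is generated by `Σ·lm(G)`. -/
def IsSigmaGBasis {K V : Type*} [Field K] {r : ℕ} (lo : LinearOrder ((V × (Fin r → ℕ)) →₀ ℕ))
    (G : Set (MvPolynomial (V × (Fin r → ℕ)) K))
    (I : Ideal (MvPolynomial (V × (Fin r → ℕ)) K)) : Prop :=
  G ⊆ ↑I ∧
  lmIdeal lo (I : Set (MvPolynomial (V × (Fin r → ℕ)) K)) =
    Ideal.span {p | ∃ (σ : Fin r → ℕ) (g : MvPolynomial (V × (Fin r → ℕ)) K),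
      g ∈ G ∧ g ≠ 0 ∧ p = MvPolynomial.monomial (shiftMon σ (lmo lo g)) (1 : K)}

/-- `I` is a Σ-ideal: it is invariant under all the shift endomorphisms. -/
def IsSigmaIdeal {K V : Type*} [CommSemiring K] {r : ℕ}
    (I : Ideal (MvPolynomial (V × (Fin r → ℕ)) K)) : Prop :=
  ∀ (σ : Fin r → ℕ) (p : MvPolynomial (V × (Fin r → ℕ)) K), p ∈ I → shiftPoly K σ p ∈ I

/-- The weight function `w : M → Σ̂ = Σ ∪ {0}` (here `Σ̂` is `WithBot (Fin r → ℕ)`,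
with `⊥` the extra element "0"):  `w(m)` is the `<`-maximum of the weights of the
variables occurring in `m`, where `<` is the given monomial ordering `loS` of `Σ`. -/
def wfun {V : Type*} {r : ℕ} (loS : LinearOrder (Fin r → ℕ))
    (m : (V × (Fin r → ℕ)) →₀ ℕ) : WithBot (Fin r → ℕ) :=
  @Finset.max _ loS (m.support.image (fun p => p.2))

/-- Addition in the idempotent semiring `Σ̂`: the maximum with respect to the
monomial ordering `loS` of `Σ`, with `⊥` as neutral element. -/
def hatAdd {r : ℕ} (loS : LinearOrder (Fin r → ℕ)) (a b : WithBot (Fin r → ℕ)) :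
    WithBot (Fin r → ℕ) :=
  @Max.max _ (@WithBot.linearOrder _ loS).toMax a b

/-- The order `≤` on `Σ̂` induced by the monomial ordering `loS` of `Σ`. -/
def hatLe {r : ℕ} (loS : LinearOrder (Fin r → ℕ)) (a b : WithBot (Fin r → ℕ)) : Prop :=
  @LE.le _ (@WithBot.linearOrder _ loS).toLE a b

/-- The strict order `<` on `Σ̂` induced by the monomial ordering `loS` of `Σ`. -/
def hatLt {r : ℕ} (loS : LinearOrder (Fin r → ℕ)) (a b : WithBot (Fin r → ℕ)) : Prop :=
  @LT.lt _ (@WithBot.linearOrder _ loS).toLT a b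

/-- The order function `ord : M → ℕ ∪ {−∞}`:  the maximum of `deg σ` over the
variables `x(σ)` occurring in `m` (and `−∞ = ⊥` for `m = 1`). -/
def ordFun {V : Type*} {r : ℕ} (m : (V × (Fin r → ℕ)) →₀ ℕ) : WithBot ℕ :=
  (m.support.image (fun p => degS p.2)).max

/-- A polynomial is `w`-homogeneous if all its monomials have the same weight. -/
def IsWHomog {K V : Type*} [CommSemiring K] {r : ℕ} (loS : LinearOrder (Fin r → ℕ))
    (f : MvPolynomial (V × (Fin r → ℕ)) K) : Prop :=
  ∀ m ∈ f.support, ∀ n ∈ f.support, wfun loS m = wfun loS n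

/-- A polynomial is `ord`-homogeneous if all its monomials have the same order. -/
def IsOrdHomog {K V : Type*} [CommSemiring K] {r : ℕ}
    (f : MvPolynomial (V × (Fin r → ℕ)) K) : Prop :=
  ∀ m ∈ f.support, ∀ n ∈ f.support, ordFun m = ordFun n

/-- The block `m(δ) ∈ M(δ) ≅ Mon(K[X])` of a monomial `m`, collecting the variables
of weight exactly `δ`. -/
def blockAt {X : Type*} {r : ℕ} (δ : Fin r → ℕ) (m : (X × (Fin r → ℕ)) →₀ ℕ) : X →₀ ℕ :=
  Finsupp.comapDomain (fun x => (x, δ)) m (fun _ _ _ _ h => congrArg Prod.fst h)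

/-- The weight Σ-ordering `≺_w` determined by a monomial ordering `ltS` of `Σ` and a
monomial ordering `lt1` of `P(1) = K[X(1)]` (transported to every block `P(δ)` via the
isomorphism `ρ(δ)`): compare the blocks of highest weight where the monomials differ. -/
def wlt {X : Type*} {r : ℕ} (ltS : (Fin r → ℕ) → (Fin r → ℕ) → Prop)
    (lt1 : (X →₀ ℕ) → (X →₀ ℕ) → Prop)
    (m n : (X × (Fin r → ℕ)) →₀ ℕ) : Prop :=
  ∃ δ : Fin r → ℕ, lt1 (blockAt δ m) (blockAt δ n) ∧
    ∀ ε : Fin r → ℕ, ltS δ ε → blockAt ε m = blockAt ε n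

/-- The block `m(x_j) ∈ M(x_j) ≅ Mon(K[x₀(Σ)])` of a monomial `m` (here `X = ℕ`),
collecting the variables of index exactly `j`. -/
def blockIdx {r : ℕ} (j : ℕ) (m : (ℕ × (Fin r → ℕ)) →₀ ℕ) : (Fin r → ℕ) →₀ ℕ :=
  Finsupp.comapDomain (fun σ => (j, σ)) m (fun _ _ _ _ h => congrArg Prod.snd h)

/-- The shift action of `σ ∈ Σ` on the monomials of `P(x₀) = K[x₀(Σ)]`. -/
def shiftMon0 {r : ℕ} (σ : Fin r → ℕ) (m : (Fin r → ℕ) →₀ ℕ) : (Fin r → ℕ) →₀ ℕ :=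
  Finsupp.mapDomain (fun τ => σ + τ) m

/-- The index Σ-ordering `≺_i` determined by a monomial Σ-ordering `lt0` of
`P(x₀) = K[x₀(Σ)]` (transported to every `P(x_j)` by the index shift): compare the
blocks of highest index where the monomials differ. -/
def ilt {r : ℕ} (lt0 : ((Fin r → ℕ) →₀ ℕ) → ((Fin r → ℕ) →₀ ℕ) → Prop)
    (m n : (ℕ × (Fin r → ℕ)) →₀ ℕ) : Prop :=
  ∃ j : ℕ, lt0 (blockIdx j m) (blockIdx j n) ∧ ∀ k : ℕ, j < k → blockIdx k m = blockIdx k n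

/- Homogenization setup:  `X̄ = X ∪ {t}` is modelled as `Option X`, with `none`
playing the role of the homogenizing variable `t` and `some x` that of `x ∈ X`;
thus `P̄ = K[X̄(Σ)] = MvPolynomial (Option X × (Fin r → ℕ)) K ⊇ P`. -/

/-- The inclusion `P = K[X(Σ)] ⊆ P̄ = K[X̄(Σ)]`. -/
def embP (K : Type*) [CommSemiring K] {X : Type*} {r : ℕ} :
    MvPolynomial (X × (Fin r → ℕ)) K →ₐ[K] MvPolynomial (Option X × (Fin r → ℕ)) K :=
  MvPolynomial.rename (fun p => (some p.1, p.2))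

/-- The inclusion `Mon(P) ⊆ Mon(P̄)` on monomials. -/
def embMon {X : Type*} {r : ℕ} (m : (X × (Fin r → ℕ)) →₀ ℕ) :
    (Option X × (Fin r → ℕ)) →₀ ℕ :=
  Finsupp.mapDomain (fun p => (some p.1, p.2)) m

/-- The dehomogenization Σ-endomorphism `φ : P̄ → P̄` with `x(σ) ↦ x(σ)`,
`t(σ) ↦ 1`. -/
def phiBar (K : Type*) [CommSemiring K] {X : Type*} {r : ℕ} :
    MvPolynomial (Option X × (Fin r → ℕ)) K →ₐ[K]
      MvPolynomial (Option X × (Fin r → ℕ)) K :=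
  MvPolynomial.aeval (fun p => p.1.elim 1 (fun x => MvPolynomial.X (some x, p.2)))

/-- The dehomogenization map `P̄ → P` with `x(σ) ↦ x(σ)`, `t(σ) ↦ 1`. -/
def dehom (K : Type*) [CommSemiring K] {X : Type*} {r : ℕ} :
    MvPolynomial (Option X × (Fin r → ℕ)) K →ₐ[K] MvPolynomial (X × (Fin r → ℕ)) K :=
  MvPolynomial.aeval (fun p => p.1.elim 1 (fun x => MvPolynomial.X (x, p.2)))

/-- `N`, the largest `ord`-graded Σ-ideal of `P̄` contained in `ker φ`: the ideal
generated by all `ord`-homogeneous elements of `ker φ`. -/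
def Nideal (K : Type*) [CommSemiring K] (X : Type*) (r : ℕ) :
    Ideal (MvPolynomial (Option X × (Fin r → ℕ)) K) :=
  Ideal.span {f | IsOrdHomog f ∧ phiBar K f = 0}

/-- The top order of a polynomial: the maximum of the orders of its monomials. -/
def topord {K V : Type*} [CommSemiring K] {r : ℕ}
    (f : MvPolynomial (V × (Fin r → ℕ)) K) : WithBot ℕ :=
  f.support.sup (fun m => ordFun m)

/-- The `ord`-homogenization `I*` of an ideal `I ⊆ P`: the ideal of `P̄` generated by
all `ord`-homogeneous elements of `φ⁻¹(I)`. -/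
def Istar {K : Type*} [Field K] {X : Type*} {r : ℕ}
    (I : Ideal (MvPolynomial (X × (Fin r → ℕ)) K)) :
    Ideal (MvPolynomial (Option X × (Fin r → ℕ)) K) :=
  Ideal.span {f | IsOrdHomog f ∧ dehom K f ∈ I}

/-- A monomial of `P̄` is `t`-free when it lies in `M = Mon(P)`. -/
def TFree {X : Type*} {r : ℕ} (m : (Option X × (Fin r → ℕ)) →₀ ℕ) : Prop :=
  ∀ p ∈ m.support, p.1 ≠ (none : Option X)

/-- A monomial of `P̄` is normal modulo `N` if it is of the form `m ∈ M`, or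
`t(σ)·n` with `n ∈ M`, `deg σ > ord n` and `t(σ)` the `≺`-least variable `t(τ)`
with `deg τ = deg σ`. -/
def NormalMon {X : Type*} {r : ℕ} (lo : LinearOrder ((Option X × (Fin r → ℕ)) →₀ ℕ))
    (m : (Option X × (Fin r → ℕ)) →₀ ℕ) : Prop :=
  TFree m ∨ ∃ (σ : Fin r → ℕ) (n : (Option X × (Fin r → ℕ)) →₀ ℕ),
    TFree n ∧ ordFun n < (degS σ : WithBot ℕ) ∧
    m = Finsupp.single ((none : Option X), σ) 1 + n ∧
    ∀ τ : Fin r → ℕ, degS τ = degS σ →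
      oLE lo (Finsupp.single ((none : Option X), σ) 1)
        (Finsupp.single ((none : Option X), τ) 1)

/-- `lo` is an `ord`-homogenization Σ-ordering of `P̄`: it is compatible with the
order function, and `t(σ)·m ≺ n` whenever `m, n ∈ M` and `deg σ = ord n > ord m`. -/
def IsHomogOrd {X : Type*} {r : ℕ}
    (lo : LinearOrder ((Option X × (Fin r → ℕ)) →₀ ℕ)) : Prop :=
  (∀ m n : (Option X × (Fin r → ℕ)) →₀ ℕ, ordFun m < ordFun n → oLT lo m n) ∧
  ∀ (m n : (Option X × (Fin r → ℕ)) →₀ ℕ) (σ : Fin r → ℕ),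
    TFree m → TFree n → (degS σ : WithBot ℕ) = ordFun n → ordFun m < ordFun n →
    oLT lo (Finsupp.single ((none : Option X), σ) 1 + m) n

end


lemma sum_map_single' {V : Type*} (m : V →₀ ℕ) :
    (Multiset.map (fun v => Finsupp.single v 1) (Finsupp.toMultiset m)).sum = m := by
  induction m using Finsupp.induction with
  | zero => simp
  | single_add a n f _ _ ih =>
      rw [Finsupp.toMultiset_add, Multiset.map_add, Multiset.sum_add, ih,
        Finsupp.toMultiset_single, Multiset.map_nsmul, Multiset.map_singleton,
        Multiset.sum_nsmul, Multiset.sum_singleton, Finsupp.smul_single, smul_eq_mul, mul_one]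

theorem auxwf {V M : Type*} [AddCommMonoid M] [LinearOrder M]
    (h1 : ∀ m : M, 0 ≤ m)
    (h2 : ∀ m n t : M, m < n → t + m < t + n)
    (g : V → M)
    (hsurj : ∀ m : M, ∃ L : List V, (L.map g).sum = m)
    (hvar : WellFounded (fun u v : V => g u < g v)) :
    WellFounded ((· < ·) : M → M → Prop) := by
  have hmono : ∀ t a b : M, a ≤ b → t + a ≤ t + b := by
    intro t a b h
    rcases h.lt_or_eq with h' | h'
    · exact (h2 a b t h').le
    · rw [h']
  have hle_add : ∀ a c : M, a ≤ c + a := by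
    intro a c
    rcases (h1 c).lt_or_eq.symm with h' | h'
    · rw [← h', zero_add]
    · have := h2 0 c a h'
      rw [add_zero] at this
      rw [add_comm]
      exact this.le
  have hadd : ∀ a b c d : M, a ≤ b → c ≤ d → a + c ≤ b + d := by
    intro a b c d hab hcd
    calc a + c ≤ a + d := hmono a c d hcd
      _ = d + a := add_comm a d
      _ ≤ d + b := hmono d a b hab
      _ = b + d := add_comm d b
  set rle : V → V → Prop := fun u v => g u ≤ g v with hrle
  haveI : IsRefl V rle := ⟨fun a => le_refl _⟩
  haveI : IsTrans V rle := ⟨fun a b c h h' => le_trans h h'⟩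
  haveI : IsStrictOrder V (fun u v : V => g u < g v) :=
    { irrefl := fun a h => lt_irrefl _ h
      trans := fun a b c h h' => lt_trans h h' }
  have hpwo : (Set.univ : Set V).PartiallyWellOrderedOn rle := by
    intro f
    by_contra hc
    push_neg at hc
    exact (@RelEmbedding.natGT V (fun u v : V => g u < g v) _ (fun n => (f n).1) fun n =>
      not_le.mp (hc n (n + 1) (Nat.lt_succ_self n))).not_wellFounded hvar
  have hlist := Set.PartiallyWellOrderedOn.partiallyWellOrderedOn_sublistForall₂ rle hpwo
  have key : ∀ L₁ L₂ : List V, List.SublistForall₂ rle L₁ L₂ →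
      (L₁.map g).sum ≤ (L₂.map g).sum := by
    intro L₁ L₂ h
    induction h with
    | nil => exact h1 _
    | cons hab _ ih =>
        simp only [List.map_cons, List.sum_cons]
        exact hadd _ _ _ _ hab ih
    | cons_right _ ih =>
        simp only [List.map_cons, List.sum_cons]
        exact le_trans ih (hle_add _ _)
  rw [RelEmbedding.wellFounded_iff_isEmpty]
  constructor
  intro e
  have hdesc : ∀ m n : ℕ, m < n → e n < e m := fun m n h => e.map_rel_iff.mpr h
  choose L hL using fun n => hsurj (e n)
  obtain ⟨m, n, hmn, hsub⟩ := hlist (fun n => ⟨L n, fun x _ => Set.mem_univ x⟩)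
  have := key (L m) (L n) hsub
  rw [hL, hL] at this
  exact absurd this (not_le.mpr (hdesc m n hmn))

/-- A total ordering of the monomials of `P` with `1 ⪯ m` for all
`m` and compatible with multiplication is a well-ordering (i.e. a monomial ordering
of `P`) if and only if its restriction to the set of variables `X(Σ)` is a
well-ordering. -/
theorem statement_1 {X : Type*} [Countable X] {r : ℕ}
    (lo : LinearOrder ((X × (Fin r → ℕ)) →₀ ℕ))
    (h1 : ∀ m : (X × (Fin r → ℕ)) →₀ ℕ, oLE lo 0 m)
    (h2 : ∀ m n t : (X × (Fin r → ℕ)) →₀ ℕ, oLT lo m n → oLT lo (t + m) (t + n)) :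
    WellFounded (oLT lo) ↔
      WellFounded (fun u v : X × (Fin r → ℕ) =>
        oLT lo (Finsupp.single u 1) (Finsupp.single v 1)) := by
  constructor
  · intro h
    exact InvImage.wf (fun u => Finsupp.single u 1) h
  · intro hvar
    have hsurj : ∀ m : (X × (Fin r → ℕ)) →₀ ℕ,
        ∃ L : List (X × (Fin r → ℕ)),
          (L.map (fun v => Finsupp.single v 1)).sum = m := by
      intro m
      refine ⟨(Finsupp.toMultiset m).toList, ?_⟩
      have h := sum_map_single' m
      rw [← Multiset.coe_toList (Finsupp.toMultiset m), Multiset.map_coe,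
        Multiset.sum_coe] at h
      exact h
    exact @auxwf (X × (Fin r → ℕ)) _ _ lo h1 h2 (fun v => Finsupp.single v 1) hsurj hvar
end

section
/- Let ≺ be a monomial Σ-ordering of P. Then m ⪯ σ·m for all monomials m ∈ M and all σ ∈ Σ. -/
/-- For a monomial Σ-ordering of `P` one has `m ⪯ σ·m` for every
monomial `m` and every `σ ∈ Σ`. -/
theorem statement_2 {X : Type*} {r : ℕ}
    (lo : LinearOrder ((X × (Fin r → ℕ)) →₀ ℕ)) (h : IsMonOrd lo)
    (hshift : ∀ (σ : Fin r → ℕ) (m n : (X × (Fin r → ℕ)) →₀ ℕ),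
      oLT lo m n → oLT lo (shiftMon σ m) (shiftMon σ n))
    (m : (X × (Fin r → ℕ)) →₀ ℕ) (σ : Fin r → ℕ) :
    oLE lo m (shiftMon σ m) := by
  by_contra hc
  have hlt : oLT lo (shiftMon σ m) m := (lo.lt_iff_le_not_ge _ _).mpr ⟨(lo.le_total _ _).resolve_left hc, hc⟩
  set f : ℕ → ((X × (Fin r → ℕ)) →₀ ℕ) := fun n => (shiftMon σ)^[n] m with hf
  have hdesc : ∀ n, oLT lo (f (n+1)) (f n) := by
    intro n
    induction n with
    | zero => exact hlt
    | succ k ih =>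
      have := hshift σ _ _ ih
      simpa [hf, Function.iterate_succ_apply'] using this
  obtain ⟨a, ⟨n, rfl⟩, hmin⟩ := h.wf.has_min (Set.range f) ⟨f 0, 0, rfl⟩
  exact hmin (f (n+1)) ⟨n+1, rfl⟩ (hdesc n)
end

section
/- The weight Σ-ordering ≺_w of P is a monomial Σ-ordering of P. That is: fix a monomial ordering < of Σ and a monomial ordering ≺ of the subalgebra P(1) = K[X(1)], extended to each P(σ) = K[X(σ)] via the isomorphism m ↦ σ·m; writing each monomial m ∈ M uniquely as m = m(δ₁)⋯m(δ_k) with m(δ_i) ∈ M(δ_i) and δ₁ > … > δ_k, define m ≺_w n (for m = m(δ₁)⋯m(δ_k), n = n(δ₁)⋯n(δ_k)) if m(δ_j) = n(δ_j) for j < i and m(δ_i) ≺ n(δ_i) for some i. Then ≺_w is a monomial ordering of P satisfying: m ≺_w n implies σ·m ≺_w σ·n for all σ ∈ Σ. -/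
section Aux3

variable {X : Type*} {r : ℕ}

private lemma blockAt_apply' (δ : Fin r → ℕ) (m : (X × (Fin r → ℕ)) →₀ ℕ) (x : X) :
    blockAt δ m x = m (x, δ) := rfl

private lemma blockAt_zero' (δ : Fin r → ℕ) :
    blockAt δ (0 : (X × (Fin r → ℕ)) →₀ ℕ) = 0 := by
  ext x; rfl

private lemma blockAt_add' (δ : Fin r → ℕ) (m n : (X × (Fin r → ℕ)) →₀ ℕ) :
    blockAt δ (m + n) = blockAt δ m + blockAt δ n := by
  ext x
  simp [blockAt_apply', Finsupp.add_apply]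

private lemma eq_of_blocks' {m n : (X × (Fin r → ℕ)) →₀ ℕ}
    (h : ∀ δ, blockAt δ m = blockAt δ n) : m = n := by
  ext p
  have := congrArg (fun f : X →₀ ℕ => f p.1) (h p.2)
  simpa [blockAt_apply'] using this

private lemma shift_inj' (σ : Fin r → ℕ) :
    Function.Injective (fun p : X × (Fin r → ℕ) => (p.1, σ + p.2)) := by
  rintro ⟨x, a⟩ ⟨y, b⟩ h
  simp only [Prod.mk.injEq] at h
  exact Prod.ext h.1 (add_left_cancel h.2)

private lemma blockAt_shift' (σ τ : Fin r → ℕ) (m : (X × (Fin r → ℕ)) →₀ ℕ) :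
    blockAt (σ + τ) (shiftMon σ m) = blockAt τ m := by
  ext x
  rw [blockAt_apply', blockAt_apply']
  exact Finsupp.mapDomain_apply (shift_inj' σ) m (x, τ)

private lemma blockAt_shift_notin' (σ ε : Fin r → ℕ) (m : (X × (Fin r → ℕ)) →₀ ℕ)
    (h : ¬ ∃ τ, ε = σ + τ) : blockAt ε (shiftMon σ m) = 0 := by
  ext x
  rw [blockAt_apply']
  show Finsupp.mapDomain (fun p : X × (Fin r → ℕ) => (p.1, σ + p.2)) m (x, ε) = _
  rw [Finsupp.mapDomain_notin_range]
  · rfl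
  · rintro ⟨⟨y, τ⟩, hp⟩
    simp only [Prod.mk.injEq] at hp
    exact h ⟨τ, hp.2.symm⟩

private lemma lo_trans' {β : Type*} (lo : LinearOrder β) {a b c : β}
    (h1 : oLT lo a b) (h2 : oLT lo b c) : oLT lo a c :=
  @lt_trans _ lo.toPartialOrder.toPreorder _ _ _ h1 h2

private lemma lo_irrefl' {β : Type*} (lo : LinearOrder β) (a : β) : ¬ oLT lo a a :=
  @lt_irrefl _ lo.toPartialOrder.toPreorder a

private lemma lo_asymm' {β : Type*} (lo : LinearOrder β) {a b : β}
    (h1 : oLT lo a b) : ¬ oLT lo b a :=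
  fun h2 => lo_irrefl' lo a (lo_trans' lo h1 h2)

private lemma lo_lt_of_lt_of_le' {β : Type*} (lo : LinearOrder β) {a b c : β}
    (h1 : oLT lo a b) (h2 : oLE lo b c) : oLT lo a c :=
  @lt_of_lt_of_le _ lo.toPartialOrder.toPreorder _ _ _ h1 h2

private lemma lt_of_add_lt' (loS : LinearOrder (Fin r → ℕ)) (hS : IsMonOrd loS)
    (σ : Fin r → ℕ) {a b : Fin r → ℕ} (h : oLT loS (σ + a) (σ + b)) : oLT loS a b := by
  rcases @lt_trichotomy _ loS a b with h' | h' | h'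
  · exact h'
  · subst h'; exact absurd h (lo_irrefl' loS _)
  · exact absurd h (lo_asymm' loS (hS.add_lt _ _ _ h'))

/-- Currying a monomial of `P` into a finitely supported family of blocks. -/
private noncomputable def tow (m : (X × (Fin r → ℕ)) →₀ ℕ) : (Fin r → ℕ) →₀ (X →₀ ℕ) :=
  (Finsupp.equivMapDomain (Equiv.prodComm X (Fin r → ℕ)) m).curry

private lemma tow_apply (m : (X × (Fin r → ℕ)) →₀ ℕ) (δ : Fin r → ℕ) :
    tow m δ = blockAt δ m := by
  ext x
  rw [blockAt_apply']
  show (Finsupp.equivMapDomain (Equiv.prodComm X (Fin r → ℕ)) m).curry δ x = _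
  rw [Finsupp.curry_apply, Finsupp.equivMapDomain_apply]
  rfl

end Aux3

/-- The weight Σ-ordering `≺_w` of `P`, defined from a monomial
ordering of `Σ` and a monomial ordering of `P(1)` (extended to the blocks `P(σ)` by
the isomorphisms `ρ(σ)`), is a monomial Σ-ordering of `P`: a strict total
well-founded order with `1` minimal, compatible with multiplication and with the
Σ-action. -/
theorem statement_3 {X : Type*} [Countable X] {r : ℕ}
    (loS : LinearOrder (Fin r → ℕ)) (hS : IsMonOrd loS)
    (lo1 : LinearOrder (X →₀ ℕ)) (h1 : IsMonOrd lo1) :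
    (∀ m n : (X × (Fin r → ℕ)) →₀ ℕ,
        wlt (oLT loS) (oLT lo1) m n ∨ m = n ∨ wlt (oLT loS) (oLT lo1) n m) ∧
    (∀ m : (X × (Fin r → ℕ)) →₀ ℕ, ¬ wlt (oLT loS) (oLT lo1) m m) ∧
    (∀ a b c : (X × (Fin r → ℕ)) →₀ ℕ, wlt (oLT loS) (oLT lo1) a b →
        wlt (oLT loS) (oLT lo1) b c → wlt (oLT loS) (oLT lo1) a c) ∧
    WellFounded (wlt (oLT loS) (oLT lo1)) ∧
    (∀ m : (X × (Fin r → ℕ)) →₀ ℕ, ¬ wlt (oLT loS) (oLT lo1) m 0) ∧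
    (∀ m n t : (X × (Fin r → ℕ)) →₀ ℕ,
        wlt (oLT loS) (oLT lo1) m n → wlt (oLT loS) (oLT lo1) (t + m) (t + n)) ∧
    (∀ (σ : Fin r → ℕ) (m n : (X × (Fin r → ℕ)) →₀ ℕ),
        wlt (oLT loS) (oLT lo1) m n →
          wlt (oLT loS) (oLT lo1) (shiftMon σ m) (shiftMon σ n))  := by
  classical
  have hiff : ∀ m n : (X × (Fin r → ℕ)) →₀ ℕ, wlt (oLT loS) (oLT lo1) m n ↔
      Finsupp.Lex (Function.swap (oLT loS)) (oLT lo1) (tow m) (tow n) := by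
    intro m n
    constructor
    · rintro ⟨δ, hlt, heq⟩
      exact ⟨δ, fun d hd => by rw [tow_apply, tow_apply, heq d hd],
        by rw [tow_apply, tow_apply]; exact hlt⟩
    · rintro ⟨δ, heq, hlt⟩
      refine ⟨δ, by rwa [tow_apply, tow_apply] at hlt, fun ε hε => ?_⟩
      have := heq ε hε
      rwa [tow_apply, tow_apply] at this
  haveI : IsTrichotomous (Fin r → ℕ) (Function.swap (oLT loS)) := by
    constructor
    intro a b
    rcases @lt_trichotomy _ loS a b with h | h | h
    · exact fun _ hba => absurd h hba
    · exact fun _ _ => h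
    · exact fun hab _ => absurd h hab
  have hwfLex : WellFounded (Finsupp.Lex (Function.swap (oLT loS)) (oLT lo1)) :=
    Finsupp.Lex.wellFounded'
      (fun n h => lo_irrefl' lo1 n (lo_lt_of_lt_of_le' lo1 h (h1.zero_le n)))
      h1.wf hS.wf
  have hwf : WellFounded (wlt (oLT loS) (oLT lo1)) :=
    Subrelation.wf (fun {m n} h => (hiff m n).mp h) (InvImage.wf tow hwfLex)
  refine ⟨?_, ?_, ?_, hwf, ?_, ?_, ?_⟩
  · -- totality
    intro m n
    by_cases hmn : m = n
    · exact Or.inr (Or.inl hmn)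
    set D : Finset (Fin r → ℕ) :=
      ((m.support ∪ n.support).image Prod.snd).filter
        (fun δ => blockAt δ m ≠ blockAt δ n) with hDdef
    have hmemD : ∀ δ, blockAt δ m ≠ blockAt δ n → δ ∈ D := by
      intro δ hne
      obtain ⟨x, hx⟩ := Finsupp.ne_iff.mp hne
      rw [blockAt_apply', blockAt_apply'] at hx
      have hsup : (x, δ) ∈ m.support ∪ n.support := by
        rw [Finset.mem_union, Finsupp.mem_support_iff, Finsupp.mem_support_iff]
        by_contra hc
        push_neg at hc
        exact hx (hc.1.trans hc.2.symm)
      exact Finset.mem_filter.mpr ⟨Finset.mem_image_of_mem _ hsup, hne⟩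
    have hne : D.Nonempty := by
      by_contra hD
      apply hmn
      apply eq_of_blocks'
      intro δ
      by_contra hb
      exact hD ⟨δ, hmemD δ hb⟩
    set δ0 := @Finset.max' _ loS D hne with hδ0
    have habove : ∀ ε, oLT loS δ0 ε → blockAt ε m = blockAt ε n := by
      intro ε hε
      by_contra hb
      have hle : oLE loS ε δ0 := @Finset.le_max' _ loS D ε (hmemD ε hb)
      exact lo_irrefl' loS δ0 (lo_lt_of_lt_of_le' loS hε hle)
    have hδD : δ0 ∈ D := @Finset.max'_mem _ loS D hne
    have hδne : blockAt δ0 m ≠ blockAt δ0 n := (Finset.mem_filter.mp hδD).2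
    rcases @lt_trichotomy _ lo1 (blockAt δ0 m) (blockAt δ0 n) with h | h | h
    · exact Or.inl ⟨δ0, h, habove⟩
    · exact absurd h hδne
    · exact Or.inr (Or.inr ⟨δ0, h, fun ε hε => (habove ε hε).symm⟩)
  · -- irreflexivity
    rintro m ⟨δ, hlt, -⟩
    exact lo_irrefl' lo1 _ hlt
  · -- transitivity
    rintro a b c ⟨δ1, hlt1, heq1⟩ ⟨δ2, hlt2, heq2⟩
    rcases @lt_trichotomy _ loS δ1 δ2 with h | h | h
    · exact ⟨δ2, by rw [heq1 δ2 h]; exact hlt2,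
        fun ε hε => (heq1 ε (lo_trans' loS h hε)).trans (heq2 ε hε)⟩
    · subst h
      exact ⟨δ1, lo_trans' lo1 hlt1 hlt2,
        fun ε hε => (heq1 ε hε).trans (heq2 ε hε)⟩
    · exact ⟨δ1, by rw [← heq2 δ1 h]; exact hlt1,
        fun ε hε => (heq1 ε hε).trans (heq2 ε (lo_trans' loS h hε))⟩
  · -- 0 is minimal
    rintro m ⟨δ, hlt, -⟩
    rw [blockAt_zero'] at hlt
    exact lo_irrefl' lo1 _ (lo_lt_of_lt_of_le' lo1 hlt (h1.zero_le _))
  · -- compatibility with multiplication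
    rintro m n t ⟨δ, hlt, heq⟩
    exact ⟨δ, by rw [blockAt_add', blockAt_add']; exact h1.add_lt _ _ _ hlt,
      fun ε hε => by rw [blockAt_add', blockAt_add', heq ε hε]⟩
  · -- compatibility with the Σ-action
    rintro σ m n ⟨δ, hlt, heq⟩
    refine ⟨σ + δ, ?_, ?_⟩
    · rw [blockAt_shift', blockAt_shift']; exact hlt
    · intro ε hε
      by_cases hτ : ∃ τ, ε = σ + τ
      · obtain ⟨τ, rfl⟩ := hτ
        rw [blockAt_shift', blockAt_shift']
        exact heq τ (lt_of_add_lt' loS hS σ hε)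
      · rw [blockAt_shift_notin' σ ε m hτ, blockAt_shift_notin' σ ε n hτ]
end

section
/- The index Σ-ordering ≺_i of P is a monomial Σ-ordering of P. That is: assume X = {x₀, x₁, …}, fix a monomial Σ-ordering ≺ of the subalgebra P(x₀) = K[x₀(Σ)], extended to each P(x_j) = K[x_j(Σ)] via the index-shift isomorphism x₀(σ) ↦ x_j(σ); writing each monomial m ∈ M uniquely as m = m(x_{i₁})⋯m(x_{i_k}) with m(x_{i_p}) ∈ M(x_{i_p}) and i₁ > … > i_k, define m ≺_i n (for m = m(x_{i₁})⋯m(x_{i_k}), n = n(x_{i₁})⋯n(x_{i_k})) if m(x_{i_q}) = n(x_{i_q}) for q < p and m(x_{i_p}) ≺ n(x_{i_p}) for some p. Then ≺_i is a monomial ordering of P satisfying: m ≺_i n implies σ·m ≺_i σ·n for all σ ∈ Σ. -/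
section Aux
variable {r : ℕ}

theorem blockIdx_apply (j : ℕ) (m : (ℕ × (Fin r → ℕ)) →₀ ℕ) (σ : Fin r → ℕ) :
    blockIdx j m σ = m (j, σ) := rfl

theorem blockIdx_ext {m n : (ℕ × (Fin r → ℕ)) →₀ ℕ}
    (h : ∀ j, blockIdx j m = blockIdx j n) : m = n := by
  ext p
  have := congrArg (fun f => f p.2) (h p.1)
  simpa [blockIdx_apply] using this

theorem blockIdx_add (j : ℕ) (m n : (ℕ × (Fin r → ℕ)) →₀ ℕ) :
    blockIdx j (m + n) = blockIdx j m + blockIdx j n := by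
  ext σ; simp [blockIdx_apply]

theorem blockIdx_zero (j : ℕ) : blockIdx j (0 : (ℕ × (Fin r → ℕ)) →₀ ℕ) = 0 := by
  ext σ; simp [blockIdx_apply]

theorem blockIdx_shift (j : ℕ) (σ : Fin r → ℕ) (m : (ℕ × (Fin r → ℕ)) →₀ ℕ) :
    blockIdx j (shiftMon σ m) = shiftMon0 σ (blockIdx j m) := by
  have hinj : Function.Injective (fun p : ℕ × (Fin r → ℕ) => (p.1, σ + p.2)) := by
    intro a b hab
    have hab' : (a.1, σ + a.2) = (b.1, σ + b.2) := hab
    obtain ⟨h1, h2⟩ := Prod.mk.inj hab' 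
    exact Prod.ext h1 (add_left_cancel h2)
  have hinj0 : Function.Injective (fun τ : Fin r → ℕ => σ + τ) :=
    fun a b hab => add_left_cancel hab
  ext τ
  by_cases h : ∃ τ', τ = σ + τ'
  · obtain ⟨τ', rfl⟩ := h
    rw [blockIdx_apply]
    show shiftMon σ m (j, σ + τ') = Finsupp.mapDomain _ (blockIdx j m) (σ + τ')
    rw [show ((j : ℕ), σ + τ') = (fun p : ℕ × (Fin r → ℕ) => (p.1, σ + p.2)) (j, τ') from rfl]
    rw [shiftMon, Finsupp.mapDomain_apply hinj]
    rw [show σ + τ' = (fun τ : Fin r → ℕ => σ + τ) τ' from rfl,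
      Finsupp.mapDomain_apply hinj0, blockIdx_apply]
  · rw [blockIdx_apply]
    show shiftMon σ m (j, τ) = Finsupp.mapDomain _ (blockIdx j m) τ
    rw [shiftMon, Finsupp.mapDomain_notin_range, Finsupp.mapDomain_notin_range]
    · rintro ⟨τ', hτ'⟩; exact h ⟨τ', hτ'.symm⟩
    · rintro ⟨p, hp⟩; exact h ⟨p.2, (congrArg Prod.snd hp).symm⟩

end Aux

/-- The index Σ-ordering `≺_i` of `P` (here `X = {x₀,x₁,…} = ℕ`),
defined from a monomial Σ-ordering of `P(x₀) = K[x₀(Σ)]` (extended to the blocks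
`P(x_j)` by the index-shift isomorphisms), is a monomial Σ-ordering of `P`: a strict
total well-founded order with `1` minimal, compatible with multiplication and with
the Σ-action. -/
theorem statement_4 {r : ℕ}
    (lo0 : LinearOrder ((Fin r → ℕ) →₀ ℕ)) (h0 : IsMonOrd lo0)
    (hshift0 : ∀ (σ : Fin r → ℕ) (m n : (Fin r → ℕ) →₀ ℕ),
      oLT lo0 m n → oLT lo0 (shiftMon0 σ m) (shiftMon0 σ n)) :
    (∀ m n : (ℕ × (Fin r → ℕ)) →₀ ℕ,
        ilt (oLT lo0) m n ∨ m = n ∨ ilt (oLT lo0) n m) ∧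
    (∀ m : (ℕ × (Fin r → ℕ)) →₀ ℕ, ¬ ilt (oLT lo0) m m) ∧
    (∀ a b c : (ℕ × (Fin r → ℕ)) →₀ ℕ,
        ilt (oLT lo0) a b → ilt (oLT lo0) b c → ilt (oLT lo0) a c) ∧
    WellFounded (ilt (oLT lo0)) ∧
    (∀ m : (ℕ × (Fin r → ℕ)) →₀ ℕ, ¬ ilt (oLT lo0) m 0) ∧
    (∀ m n t : (ℕ × (Fin r → ℕ)) →₀ ℕ,
        ilt (oLT lo0) m n → ilt (oLT lo0) (t + m) (t + n)) ∧
    (∀ (σ : Fin r → ℕ) (m n : (ℕ × (Fin r → ℕ)) →₀ ℕ),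
        ilt (oLT lo0) m n → ilt (oLT lo0) (shiftMon σ m) (shiftMon σ n)) := by
  
  have hbot : ∀ ⦃n : (Fin r → ℕ) →₀ ℕ⦄, ¬ oLT lo0 n 0 := by
    intro n hn
    have hle : lo0.le 0 n := h0.zero_le n
    exact @lt_irrefl _ lo0.toPreorder n (@lt_of_lt_of_le _ lo0.toPreorder _ _ _ hn hle)
  refine ⟨?_, ?_, ?_, ?_, ?_, ?_, ?_⟩
  · -- totality
    intro m n
    by_cases hmn : m = n
    · exact Or.inr (Or.inl hmn)
    have hex : ∃ j, blockIdx j m ≠ blockIdx j n := by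
      by_contra h; push_neg at h; exact hmn (blockIdx_ext h)
    set S : Finset ℕ := (m.support ∪ n.support).image Prod.fst with hS
    have hmem : ∀ j, blockIdx j m ≠ blockIdx j n → j ∈ S := by
      intro j hj
      have hσ : ∃ σ, m (j, σ) ≠ n (j, σ) := by
        by_contra h; push_neg at h
        exact hj (by ext σ; simpa [blockIdx_apply] using h σ)
      obtain ⟨σ, hσ⟩ := hσ
      have : (j, σ) ∈ m.support ∪ n.support := by
        simp only [Finset.mem_union, Finsupp.mem_support_iff]
        by_contra h; push_neg at h; rw [h.1, h.2] at hσ; exact hσ rfl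
      exact Finset.mem_image.2 ⟨(j, σ), this, rfl⟩
    set D : Finset ℕ := S.filter (fun j => blockIdx j m ≠ blockIdx j n) with hD
    have hDne : D.Nonempty := by
      obtain ⟨j, hj⟩ := hex
      exact ⟨j, Finset.mem_filter.2 ⟨hmem j hj, hj⟩⟩
    set j := D.max' hDne with hj
    have hjD : j ∈ D := D.max'_mem hDne
    have hjne : blockIdx j m ≠ blockIdx j n := (Finset.mem_filter.1 hjD).2
    have hjmax : ∀ k, j < k → blockIdx k m = blockIdx k n := by
      intro k hk
      by_contra h
      exact absurd (D.le_max' k (Finset.mem_filter.2 ⟨hmem k h, h⟩)) (not_le.2 hk)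
    rcases @lt_trichotomy _ lo0 (blockIdx j m) (blockIdx j n) with h | h | h
    · exact Or.inl ⟨j, h, hjmax⟩
    · exact absurd h hjne
    · exact Or.inr (Or.inr ⟨j, h, fun k hk => (hjmax k hk).symm⟩)
  · -- irreflexivity
    rintro m ⟨j, hj, -⟩
    exact @lt_irrefl _ lo0.toPreorder _ hj
  · -- transitivity
    rintro a b c ⟨j1, h1, h1'⟩ ⟨j2, h2, h2'⟩
    rcases lt_trichotomy j1 j2 with h | h | h
    · refine ⟨j2, ?_, fun k hk => (h1' k (h.trans hk)).trans (h2' k hk)⟩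
      rw [h1' j2 h]; exact h2
    · subst h
      exact ⟨j1, @lt_trans _ lo0.toPreorder _ _ _ h1 h2,
        fun k hk => (h1' k hk).trans (h2' k hk)⟩
    · refine ⟨j1, ?_, fun k hk => (h1' k hk).trans (h2' k (h.trans hk))⟩
      rw [← h2' j1 h]; exact h1
  · -- well-foundedness
    have key : ∀ m n : (ℕ × (Fin r → ℕ)) →₀ ℕ, ilt (oLT lo0) m n →
        Finsupp.Lex (fun a b : ℕ => b < a) (oLT lo0) (Finsupp.curry m) (Finsupp.curry n) := by
      rintro m n ⟨j, hj, hj'⟩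
      refine ⟨j, fun d hd => ?_, ?_⟩
      · have hd' := hj' d hd
        ext σ
        rw [Finsupp.curry_apply, Finsupp.curry_apply, ← blockIdx_apply, ← blockIdx_apply, hd']
      · have e1 : Finsupp.curry m j = blockIdx j m := by
          ext σ; rw [Finsupp.curry_apply]; rfl
        have e2 : Finsupp.curry n j = blockIdx j n := by
          ext σ; rw [Finsupp.curry_apply]; rfl
        rw [e1, e2]; exact hj
    have htri : IsTrichotomous ℕ (fun a b : ℕ => b < a) := by
      constructor
      intro a b
      rcases lt_trichotomy a b with h | h | h
      · intro _ h2; exact absurd h h2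
      · intro _ _; exact h
      · intro h1 _; exact absurd h h1
    have wfL : WellFounded (Finsupp.Lex (fun a b : ℕ => b < a) (oLT lo0)) :=
      Finsupp.Lex.wellFounded' hbot h0.wf
        (show WellFounded ((· < ·) : ℕ → ℕ → Prop) from wellFounded_lt)
    exact Subrelation.wf (fun {m n} h => key m n h) (InvImage.wf Finsupp.curry wfL)
  · -- 1 is minimal
    rintro m ⟨j, hj, -⟩
    rw [blockIdx_zero] at hj
    exact hbot hj
  · -- compatibility with multiplication
    rintro m n t ⟨j, hj, hj'⟩
    refine ⟨j, ?_, fun k hk => ?_⟩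
    · rw [blockIdx_add, blockIdx_add]; exact h0.add_lt _ _ _ hj
    · rw [blockIdx_add, blockIdx_add, hj' k hk]
  · -- compatibility with the shift action
    rintro σ m n ⟨j, hj, hj'⟩
    refine ⟨j, ?_, fun k hk => ?_⟩
    · rw [blockIdx_shift, blockIdx_shift]; exact hshift0 σ _ _ hj
    · rw [blockIdx_shift, blockIdx_shift, hj' k hk]
end

section
/- Buchberger's criterion in the polynomial ring P with (possibly countably infinitely many) variables: let P be endowed with a monomial ordering ≺ and let G be a (possibly infinite) generating set of an ideal I ⊆ P. Then G is a Gröbner basis of I (i.e., LM(I) is generated by lm(G)) if and only if for all nonzero f, g ∈ G the S-polynomial spoly(f, g) has a Gröbner representation with respect to G. -/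
section OrdAux
variable {α : Type*} {lo : LinearOrder α}

theorem oLE_refl (a : α) : oLE lo a a := lo.le_refl a
theorem oLE_trans {a b c : α} (h1 : oLE lo a b) (h2 : oLE lo b c) : oLE lo a c := lo.le_trans _ _ _ h1 h2
theorem oLE_antisymm {a b : α} (h1 : oLE lo a b) (h2 : oLE lo b a) : a = b := lo.le_antisymm _ _ h1 h2
theorem oLT_iff {a b : α} : oLT lo a b ↔ oLE lo a b ∧ ¬ oLE lo b a := lo.lt_iff_le_not_ge a b
theorem oLE_of_lt {a b : α} (h1 : oLT lo a b) : oLE lo a b := (oLT_iff.1 h1).1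
theorem oLT_of_le_ne {a b : α} (h1 : oLE lo a b) (h2 : a ≠ b) : oLT lo a b := by
  rcases lo.le_total b a with h | h
  · exact absurd (oLE_antisymm h1 h) h2
  · exact oLT_iff.2 ⟨h1, fun hba => h2 (oLE_antisymm h1 hba)⟩
theorem oLT_ne {a b : α} (h1 : oLT lo a b) : a ≠ b := by
  rintro rfl; exact (oLT_iff.1 h1).2 (oLE_refl a)
theorem oLE_of_not_le {a b : α} (h1 : ¬ oLE lo a b) : oLE lo b a :=
  (lo.le_total a b).resolve_left h1
theorem oLT_of_lt_of_le {a b c : α} (h1 : oLT lo a b) (h2 : oLE lo b c) : oLT lo a c := by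
  rcases oLT_iff.1 h1 with ⟨hab, hnba⟩
  exact oLT_iff.2 ⟨oLE_trans hab h2, fun hca => hnba (oLE_trans h2 hca)⟩
theorem oLT_of_le_of_lt {a b c : α} (h1 : oLE lo a b) (h2 : oLT lo b c) : oLT lo a c := by
  rcases oLT_iff.1 h2 with ⟨hbc, hncb⟩
  exact oLT_iff.2 ⟨oLE_trans h1 hbc, fun hca => hncb (oLE_trans hca h1)⟩
theorem oLT_irrefl {a : α} (h1 : oLT lo a a) : False := oLT_ne h1 rfl
theorem oLT_asymm {a b : α} (h1 : oLT lo a b) (h2 : oLE lo b a) : False :=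
  oLT_irrefl (oLT_of_lt_of_le h1 h2)

variable [AddCommMonoid α] (h : IsMonOrd lo)
include h

theorem oLE_add_left {a b : α} (c : α) (h1 : oLE lo a b) : oLE lo (c + a) (c + b) := by
  rcases eq_or_ne a b with rfl | hne
  · exact oLE_refl _
  · exact oLE_of_lt (h.add_lt a b c (oLT_of_le_ne h1 hne))
theorem oLT_add_left {a b : α} (c : α) (h1 : oLT lo a b) : oLT lo (c + a) (c + b) :=
  h.add_lt a b c h1
theorem oLT_add_right {a b : α} (c : α) (h1 : oLT lo a b) : oLT lo (a + c) (b + c) := by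
  rw [add_comm a c, add_comm b c]; exact h.add_lt a b c h1
theorem oLE_add_right {a b : α} (c : α) (h1 : oLE lo a b) : oLE lo (a + c) (b + c) := by
  rw [add_comm a c, add_comm b c]; exact oLE_add_left h c h1
theorem oLE_add_add {a b c d : α} (h1 : oLE lo a b) (h2 : oLE lo c d) :
    oLE lo (a + c) (b + d) :=
  oLE_trans (oLE_add_right h c h1) (oLE_add_left h b h2)
end OrdAux

section LmoAux
open MvPolynomial
variable {K : Type*} [Field K] {X : Type*} {r : ℕ}
  {lo : LinearOrder ((X × (Fin r → ℕ)) →₀ ℕ)}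

theorem lmo_zero : lmo lo (0 : MvPolynomial (X × (Fin r → ℕ)) K) = 0 := dif_pos rfl

theorem lmo_mem_support {f : MvPolynomial (X × (Fin r → ℕ)) K} (hf : f ≠ 0) :
    lmo lo f ∈ f.support := by
  rw [lmo, dif_neg hf]
  exact @Finset.max'_mem _ lo _ _

theorem le_lmo {f : MvPolynomial (X × (Fin r → ℕ)) K} {m : (X × (Fin r → ℕ)) →₀ ℕ}
    (hm : m ∈ f.support) : oLE lo m (lmo lo f) := by
  have hf : f ≠ 0 := by
    intro hf0; rw [hf0] at hm; simp at hm
  rw [lmo, dif_neg hf]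
  exact @Finset.le_max' _ lo _ _ hm

theorem lco_ne_zero {f : MvPolynomial (X × (Fin r → ℕ)) K} (hf : f ≠ 0) :
    lco lo f ≠ 0 := by
  have := lmo_mem_support (lo := lo) hf
  rwa [MvPolynomial.mem_support_iff] at this

theorem coeff_eq_zero_of_lmo_lt {f : MvPolynomial (X × (Fin r → ℕ)) K}
    {m : (X × (Fin r → ℕ)) →₀ ℕ} (hm : oLT lo (lmo lo f) m) : MvPolynomial.coeff m f = 0 := by
  by_contra hc
  exact oLT_asymm hm (le_lmo (by rwa [MvPolynomial.mem_support_iff]))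

theorem lmo_le_of_support (h : IsMonOrd lo) {f : MvPolynomial (X × (Fin r → ℕ)) K}
    {δ : (X × (Fin r → ℕ)) →₀ ℕ} (hb : ∀ m ∈ f.support, oLE lo m δ) :
    oLE lo (lmo lo f) δ := by
  rcases eq_or_ne f 0 with rfl | hf
  · rw [lmo_zero]; exact h.zero_le δ
  · exact hb _ (lmo_mem_support hf)

theorem lmo_eq_of (h : IsMonOrd lo) {f : MvPolynomial (X × (Fin r → ℕ)) K}
    {m : (X × (Fin r → ℕ)) →₀ ℕ} (hmem : m ∈ f.support)
    (hb : ∀ n ∈ f.support, oLE lo n m) : lmo lo f = m :=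
  oLE_antisymm (lmo_le_of_support h hb) (le_lmo hmem)

theorem lmo_monomial {m : (X × (Fin r → ℕ)) →₀ ℕ} {c : K} (hc : c ≠ 0) :
    lmo lo (MvPolynomial.monomial m c) = m := by
  classical
  have hne : (MvPolynomial.monomial m c : MvPolynomial (X × (Fin r → ℕ)) K) ≠ 0 := by
    simp [MvPolynomial.monomial_eq_zero, hc]
  have := lmo_mem_support (lo := lo) hne
  rwa [MvPolynomial.support_monomial, if_neg hc, Finset.mem_singleton] at this

theorem lco_monomial {m : (X × (Fin r → ℕ)) →₀ ℕ} {c : K} (hc : c ≠ 0) :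
    lco lo (MvPolynomial.monomial m c) = c := by
  classical
  rw [lco, lmo_monomial hc, MvPolynomial.coeff_monomial, if_pos rfl]

theorem coeff_mul_lmo_add_lmo (h : IsMonOrd lo) (f g : MvPolynomial (X × (Fin r → ℕ)) K) :
    MvPolynomial.coeff (lmo lo f + lmo lo g) (f * g) = lco lo f * lco lo g := by
  classical
  rw [MvPolynomial.coeff_mul]
  rw [Finset.sum_eq_single (lmo lo f, lmo lo g)]
  · rfl
  · rintro ⟨a, b⟩ hab hne
    rw [Finset.HasAntidiagonal.mem_antidiagonal] at hab
    by_contra hc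
    have ha : a ∈ f.support := by
      rw [MvPolynomial.mem_support_iff]; intro h0; apply hc; simp [h0]
    have hb : b ∈ g.support := by
      rw [MvPolynomial.mem_support_iff]; intro h0; apply hc; simp [h0]
    have haf : oLE lo a (lmo lo f) := le_lmo ha
    have hbg : oLE lo b (lmo lo g) := le_lmo hb
    rcases eq_or_ne a (lmo lo f) with rfl | hanef
    · rcases eq_or_ne b (lmo lo g) with rfl | hbneg
      · exact hne rfl
      · exact oLT_asymm (oLT_add_left h (lmo lo f) (oLT_of_le_ne hbg hbneg)) (hab ▸ oLE_refl _)
    · have : oLT lo (a + b) (lmo lo f + lmo lo g) :=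
        oLT_of_lt_of_le (oLT_add_right h b (oLT_of_le_ne haf hanef)) (oLE_add_left h _ hbg)
      exact oLT_asymm this (hab ▸ oLE_refl _)
  · intro hmem
    exfalso; apply hmem; rw [Finset.HasAntidiagonal.mem_antidiagonal]

theorem coeff_mul_eq_zero_of_lt (h : IsMonOrd lo) {f g : MvPolynomial (X × (Fin r → ℕ)) K}
    {m : (X × (Fin r → ℕ)) →₀ ℕ} (hm : oLT lo (lmo lo f + lmo lo g) m) :
    MvPolynomial.coeff m (f * g) = 0 := by
  classical
  rw [MvPolynomial.coeff_mul]
  apply Finset.sum_eq_zero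
  rintro ⟨a, b⟩ hab
  rw [Finset.HasAntidiagonal.mem_antidiagonal] at hab
  by_contra hc
  have ha : a ∈ f.support := by
    rw [MvPolynomial.mem_support_iff]; intro h0; apply hc; simp [h0]
  have hb : b ∈ g.support := by
    rw [MvPolynomial.mem_support_iff]; intro h0; apply hc; simp [h0]
  have : oLE lo (a + b) (lmo lo f + lmo lo g) := oLE_add_add h (le_lmo ha) (le_lmo hb)
  rw [hab] at this
  exact oLT_asymm hm this

theorem lmo_mul (h : IsMonOrd lo) {f g : MvPolynomial (X × (Fin r → ℕ)) K}
    (hf : f ≠ 0) (hg : g ≠ 0) : lmo lo (f * g) = lmo lo f + lmo lo g := by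
  apply lmo_eq_of h
  · rw [MvPolynomial.mem_support_iff, coeff_mul_lmo_add_lmo h]
    exact mul_ne_zero (lco_ne_zero hf) (lco_ne_zero hg)
  · intro n hn
    by_contra hc
    have := coeff_mul_eq_zero_of_lt h (oLT_of_le_ne (oLE_of_not_le hc)
      (fun e => hc (e ▸ oLE_refl _)))
    rw [MvPolynomial.mem_support_iff] at hn
    exact hn this

theorem lco_mul (h : IsMonOrd lo) {f g : MvPolynomial (X × (Fin r → ℕ)) K}
    (hf : f ≠ 0) (hg : g ≠ 0) : lco lo (f * g) = lco lo f * lco lo g := by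
  rw [lco, lmo_mul h hf hg, coeff_mul_lmo_add_lmo h]

theorem lmo_mul_le (h : IsMonOrd lo) {f g : MvPolynomial (X × (Fin r → ℕ)) K}
    {δ : (X × (Fin r → ℕ)) →₀ ℕ} (hb : f ≠ 0 → g ≠ 0 → oLE lo (lmo lo f + lmo lo g) δ) :
    oLE lo (lmo lo (f * g)) δ := by
  rcases eq_or_ne f 0 with rfl | hf
  · rw [zero_mul, lmo_zero]; exact h.zero_le δ
  rcases eq_or_ne g 0 with rfl | hg
  · rw [mul_zero, lmo_zero]; exact h.zero_le δ
  · rw [lmo_mul h hf hg]; exact hb hf hg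

theorem lmo_sum_le (h : IsMonOrd lo) {ι : Type*} {s : Finset ι}
    {F : ι → MvPolynomial (X × (Fin r → ℕ)) K} {δ : (X × (Fin r → ℕ)) →₀ ℕ}
    (hb : ∀ i ∈ s, oLE lo (lmo lo (F i)) δ) :
    oLE lo (lmo lo (∑ i ∈ s, F i)) δ := by
  classical
  apply lmo_le_of_support h
  intro m hm
  obtain ⟨i, hi, hmi⟩ := Finset.mem_biUnion.1 (MvPolynomial.support_sum hm)
  exact oLE_trans (le_lmo hmi) (hb i hi)

theorem lmo_sub_lt (h : IsMonOrd lo) {p q : MvPolynomial (X × (Fin r → ℕ)) K}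
    (hlm : lmo lo p = lmo lo q) (hlc : lco lo p = lco lo q)
    (hne : p - q ≠ 0) : oLT lo (lmo lo (p - q)) (lmo lo p) := by
  classical
  have hmem := lmo_mem_support (lo := lo) hne
  rw [MvPolynomial.mem_support_iff] at hmem
  apply oLT_of_le_ne
  · apply lmo_le_of_support h
    intro m hm
    rw [MvPolynomial.mem_support_iff, MvPolynomial.coeff_sub] at hm
    rcases eq_or_ne (MvPolynomial.coeff m p) 0 with hp0 | hp0
    · have : MvPolynomial.coeff m q ≠ 0 := by
        intro hq0; rw [hp0, hq0] at hm; simp at hm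
      exact hlm ▸ le_lmo (by rwa [MvPolynomial.mem_support_iff])
    · exact le_lmo (by rwa [MvPolynomial.mem_support_iff])
  · intro heq
    rw [heq] at hmem
    rw [MvPolynomial.coeff_sub] at hmem
    apply hmem
    show lco lo p - MvPolynomial.coeff (lmo lo p) q = 0
    rw [hlc, hlm]
    exact sub_self _

end LmoAux

section RepAux
open MvPolynomial
variable {K : Type*} [Field K] {X : Type*} {r : ℕ}
  {lo : LinearOrder ((X × (Fin r → ℕ)) →₀ ℕ)}

/-- Generalized Gröbner representation with bound predicate `B`. -/
def RepP (lo : LinearOrder ((X × (Fin r → ℕ)) →₀ ℕ))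
    (G : Set (MvPolynomial (X × (Fin r → ℕ)) K)) (B : ((X × (Fin r → ℕ)) →₀ ℕ) → Prop)
    (f : MvPolynomial (X × (Fin r → ℕ)) K) : Prop :=
  ∃ (n : ℕ) (q g : Fin n → MvPolynomial (X × (Fin r → ℕ)) K),
    (∀ i, g i ∈ G) ∧ f = ∑ i, q i * g i ∧
    ∀ i, q i ≠ 0 → g i ≠ 0 → B (lmo lo (q i) + lmo lo (g i))

variable {G : Set (MvPolynomial (X × (Fin r → ℕ)) K)}
  {B B' : ((X × (Fin r → ℕ)) →₀ ℕ) → Prop}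

theorem hgr_iff {f : MvPolynomial (X × (Fin r → ℕ)) K} :
    HasGroebnerRep lo G f ↔ RepP lo G (fun m => oLE lo m (lmo lo f)) f := Iff.rfl

theorem RepP.zero : RepP lo G B (0 : MvPolynomial (X × (Fin r → ℕ)) K) :=
  ⟨0, ![], ![], fun i => Fin.elim0 i, by simp, fun i => Fin.elim0 i⟩

theorem RepP.mono (himp : ∀ a, B a → B' a) {f : MvPolynomial (X × (Fin r → ℕ)) K}
    (hf : RepP lo G B f) : RepP lo G B' f := by
  obtain ⟨n, q, g, hg, hsum, hB⟩ := hf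
  exact ⟨n, q, g, hg, hsum, fun i h1 h2 => himp _ (hB i h1 h2)⟩

theorem RepP.add {a b : MvPolynomial (X × (Fin r → ℕ)) K}
    (ha : RepP lo G B a) (hb : RepP lo G B b) : RepP lo G B (a + b) := by
  obtain ⟨n, q, g, hg, hsum, hB⟩ := ha
  obtain ⟨m, q', g', hg', hsum', hB'⟩ := hb
  refine ⟨n + m, Fin.addCases q q', Fin.addCases g g', ?_, ?_, ?_⟩
  · intro i
    refine Fin.addCases (fun i => ?_) (fun i => ?_) i <;> simp [hg, hg']
  · rw [Fin.sum_univ_add]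
    simp only [Fin.addCases_left, Fin.addCases_right]
    rw [hsum, hsum']
  · intro i
    refine Fin.addCases (fun i => ?_) (fun i => ?_) i <;>
      simp only [Fin.addCases_left, Fin.addCases_right]
    · exact hB i
    · exact hB' i

theorem RepP.sum {ι : Type*} {s : Finset ι} {F : ι → MvPolynomial (X × (Fin r → ℕ)) K}
    (hF : ∀ i ∈ s, RepP lo G B (F i)) : RepP lo G B (∑ i ∈ s, F i) :=
  Finset.sum_induction F (RepP lo G B) (fun _ _ => RepP.add) RepP.zero hF

theorem RepP.single (h : IsMonOrd lo) {q g : MvPolynomial (X × (Fin r → ℕ)) K}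
    (hgG : g ∈ G) (hb : q ≠ 0 → g ≠ 0 → B (lmo lo q + lmo lo g)) :
    RepP lo G B (q * g) :=
  ⟨1, fun _ => q, fun _ => g, fun _ => hgG, by simp, fun _ => hb⟩

theorem RepP.mul_monomial (h : IsMonOrd lo) {f : MvPolynomial (X × (Fin r → ℕ)) K}
    {m : (X × (Fin r → ℕ)) →₀ ℕ} {c : K} (hmap : ∀ a, B a → B' (m + a))
    (hf : RepP lo G B f) : RepP lo G B' (MvPolynomial.monomial m c * f) := by
  rcases eq_or_ne c 0 with rfl | hc
  · rw [MvPolynomial.monomial_zero, zero_mul]; exact RepP.zero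
  obtain ⟨n, q, g, hg, hsum, hB⟩ := hf
  refine ⟨n, fun i => MvPolynomial.monomial m c * q i, g, hg, ?_, ?_⟩
  · rw [hsum, Finset.mul_sum]
    exact Finset.sum_congr rfl fun i _ => by dsimp only; rw [mul_assoc]
  · intro i hq hgi
    dsimp only at hq ⊢
    have hqi : q i ≠ 0 := fun h0 => hq (by rw [h0, mul_zero])
    rw [lmo_mul h (by simpa [MvPolynomial.monomial_eq_zero] using hc) hqi,
      lmo_monomial hc, add_assoc]
    exact hmap _ (hB i hqi hgi)

theorem RepP.smul (h : IsMonOrd lo) {f : MvPolynomial (X × (Fin r → ℕ)) K} (c : K)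
    (hf : RepP lo G B f) : RepP lo G B (c • f) := by
  rw [MvPolynomial.smul_eq_C_mul, MvPolynomial.C_apply]
  have := RepP.mul_monomial (B' := B) (m := (0 : (X × (Fin r → ℕ)) →₀ ℕ)) (c := c) h
    (fun a ha => by rwa [zero_add]) hf
  exact this

theorem RepP.sub (h : IsMonOrd lo) {a b : MvPolynomial (X × (Fin r → ℕ)) K}
    (ha : RepP lo G B a) (hb : RepP lo G B b) : RepP lo G B (a - b) := by
  have := ha.add (RepP.smul h (-1 : K) hb)
  rwa [neg_one_smul, ← sub_eq_add_neg] at this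

theorem exists_max_bound {n : ℕ} {q g : Fin n → MvPolynomial (X × (Fin r → ℕ)) K}
    (hne : ∃ i, q i ≠ 0 ∧ g i ≠ 0) :
    ∃ δ, (∃ i, q i ≠ 0 ∧ g i ≠ 0 ∧ lmo lo (q i) + lmo lo (g i) = δ) ∧
      ∀ i, q i ≠ 0 → g i ≠ 0 → oLE lo (lmo lo (q i) + lmo lo (g i)) δ := by
  classical
  have hsne : (Finset.univ.filter (fun i => q i ≠ 0 ∧ g i ≠ 0) : Finset (Fin n)).Nonempty := by
    obtain ⟨i, hi⟩ := hne
    exact ⟨i, by simp [hi.1, hi.2]⟩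
  have htne := hsne.image (fun i => lmo lo (q i) + lmo lo (g i))
  refine ⟨@Finset.max' _ lo _ htne, ?_, ?_⟩
  · obtain ⟨i, hi, hieq⟩ := Finset.mem_image.1 (@Finset.max'_mem _ lo _ htne)
    rw [Finset.mem_filter] at hi
    exact ⟨i, hi.2.1, hi.2.2, hieq⟩
  · intro i h1 h2
    exact @Finset.le_max' _ lo
      ((Finset.univ.filter (fun i => q i ≠ 0 ∧ g i ≠ 0)).image
        (fun i => lmo lo (q i) + lmo lo (g i))) _
      (Finset.mem_image.2 ⟨i, Finset.mem_filter.2 ⟨Finset.mem_univ i, h1, h2⟩, rfl⟩)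

theorem sum_eq_zero_of_no_pair {n : ℕ} {q g : Fin n → MvPolynomial (X × (Fin r → ℕ)) K}
    (hno : ¬ ∃ i, q i ≠ 0 ∧ g i ≠ 0) : ∑ i, q i * g i = 0 := by
  push_neg at hno
  apply Finset.sum_eq_zero
  intro i _
  rcases eq_or_ne (q i) 0 with h0 | h0
  · rw [h0, zero_mul]
  · rw [hno i h0, mul_zero]

theorem RepP.exists_le_of_lt {f : MvPolynomial (X × (Fin r → ℕ)) K}
    {δ : (X × (Fin r → ℕ)) →₀ ℕ} (hf : f ≠ 0)
    (hrep : RepP lo G (fun a => oLT lo a δ) f) :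
    ∃ ε, oLT lo ε δ ∧ RepP lo G (fun a => oLE lo a ε) f := by
  obtain ⟨n, q, g, hg, hsum, hB⟩ := hrep
  have hne : ∃ i, q i ≠ 0 ∧ g i ≠ 0 := by
    by_contra hno
    exact hf (hsum.trans (sum_eq_zero_of_no_pair hno))
  obtain ⟨ε, ⟨i, h1, h2, h3⟩, hball⟩ := exists_max_bound (lo := lo) hne
  exact ⟨ε, h3 ▸ hB i h1 h2, n, q, g, hg, hsum, hball⟩

theorem exists_bound_of_mem_span {f : MvPolynomial (X × (Fin r → ℕ)) K} (hf : f ≠ 0)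
    (hfI : f ∈ Ideal.span G) :
    ∃ δ, RepP lo G (fun a => oLE lo a δ) f := by
  rw [Ideal.span] at hfI
  obtain ⟨n, c, v, hsum⟩ := Submodule.mem_span_set'.1 hfI
  have hsum' : f = ∑ i, c i * (v i : MvPolynomial (X × (Fin r → ℕ)) K) := by
    rw [← hsum]; rfl
  have hne : ∃ i, c i ≠ 0 ∧ (v i : MvPolynomial (X × (Fin r → ℕ)) K) ≠ 0 := by
    by_contra hno
    exact hf (hsum'.trans (sum_eq_zero_of_no_pair hno))
  obtain ⟨δ, _, hball⟩ := exists_max_bound (lo := lo) hne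
  exact ⟨δ, n, c, fun i => v i, fun i => (v i).2, hsum', hball⟩

end RepAux

section DivAux
open MvPolynomial
variable {K : Type*} [Field K] {X : Type*} {r : ℕ}
  {lo : LinearOrder ((X × (Fin r → ℕ)) →₀ ℕ)}
  {G : Set (MvPolynomial (X × (Fin r → ℕ)) K)}

theorem mono_mem_span {S : Set ((X × (Fin r → ℕ)) →₀ ℕ)} {m : (X × (Fin r → ℕ)) →₀ ℕ}
    (hm : (MvPolynomial.monomial m (1 : K)) ∈
      Ideal.span ((fun n => (MvPolynomial.monomial n (1 : K) :
        MvPolynomial (X × (Fin r → ℕ)) K)) '' S)) :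
    ∃ n ∈ S, n ≤ m := by
  classical
  rw [Ideal.span] at hm
  obtain ⟨k, c, v, hsum⟩ := Submodule.mem_span_set'.1 hm
  have h1 : MvPolynomial.coeff m (∑ i, c i • (v i : MvPolynomial (X × (Fin r → ℕ)) K)) =
      (1 : K) := by
    rw [hsum, MvPolynomial.coeff_monomial, if_pos rfl]
  rw [MvPolynomial.coeff_sum] at h1
  have h2 : ∃ i ∈ (Finset.univ : Finset (Fin k)),
      MvPolynomial.coeff m (c i • (v i : MvPolynomial (X × (Fin r → ℕ)) K)) ≠ 0 := by
    by_contra hno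
    push_neg at hno
    rw [Finset.sum_eq_zero hno] at h1
    exact one_ne_zero h1.symm
  obtain ⟨i, _, hi⟩ := h2
  obtain ⟨ni, hni, hvi⟩ := (v i).2
  rw [smul_eq_mul, ← hvi] at hi
  rw [MvPolynomial.coeff_mul_monomial'] at hi
  by_cases hle : ni ≤ m
  · exact ⟨ni, hni, hle⟩
  · rw [if_neg hle] at hi
    exact absurd rfl hi

theorem lcmMon_le {a b c : (X × (Fin r → ℕ)) →₀ ℕ} (hac : a ≤ c) (hbc : b ≤ c) :
    lcmMon a b ≤ c := by
  rw [Finsupp.le_def] at hac hbc ⊢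
  intro x
  rw [lcmMon, Finsupp.zipWith_apply]
  exact max_le (hac x) (hbc x)

theorem le_lcmMon_left (a b : (X × (Fin r → ℕ)) →₀ ℕ) : a ≤ lcmMon a b := by
  rw [Finsupp.le_def]
  intro x
  rw [lcmMon, Finsupp.zipWith_apply]
  exact le_max_left _ _

theorem le_lcmMon_right (a b : (X × (Fin r → ℕ)) →₀ ℕ) : b ≤ lcmMon a b := by
  rw [Finsupp.le_def]
  intro x
  rw [lcmMon, Finsupp.zipWith_apply]
  exact le_max_right _ _

theorem finsupp_tsub_add_cancel {a b : (X × (Fin r → ℕ)) →₀ ℕ} (hle : a ≤ b) :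
    b - a + a = b := by
  ext x
  have := Finsupp.le_def.1 hle x
  simp only [Finsupp.add_apply, Finsupp.tsub_apply]
  omega

theorem finsupp_tsub_tsub {a b c : (X × (Fin r → ℕ)) →₀ ℕ} (h1 : c ≤ b) (h2 : b ≤ a) :
    a - b + (b - c) = a - c := by
  ext x
  have := Finsupp.le_def.1 h1 x
  have := Finsupp.le_def.1 h2 x
  simp only [Finsupp.add_apply, Finsupp.tsub_apply]
  omega

theorem finsupp_add_tsub {a b : (X × (Fin r → ℕ)) →₀ ℕ} : a + b - b = a := by
  ext x
  simp only [Finsupp.add_apply, Finsupp.tsub_apply]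
  omega

/-- Division: if `G` is a Gröbner basis then every element of `I` has a Gröbner
representation. -/
theorem rep_of_mem (h : IsMonOrd lo) {I : Ideal (MvPolynomial (X × (Fin r → ℕ)) K)}
    (hlm : lmIdeal lo (I : Set (MvPolynomial (X × (Fin r → ℕ)) K)) = lmIdeal lo G)
    (hGI : G ⊆ ↑I) : ∀ f ∈ I, HasGroebnerRep lo G f := by
  have main : ∀ m : (X × (Fin r → ℕ)) →₀ ℕ, ∀ f ∈ I, lmo lo f = m →
      HasGroebnerRep lo G f := by
    intro m
    induction m using (h.wf).induction with
    | _ m IH =>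
      intro f hfI hflm
      rcases eq_or_ne f 0 with rfl | hf0
      · exact hgr_iff.2 RepP.zero
      -- lm f lies in lmIdeal I = lmIdeal G
      have hmem : (MvPolynomial.monomial (lmo lo f) (1 : K)) ∈
          lmIdeal lo (I : Set (MvPolynomial (X × (Fin r → ℕ)) K)) :=
        Ideal.subset_span ⟨f, ⟨hfI, hf0⟩, rfl⟩
      rw [hlm] at hmem
      have himg : ((fun g => (MvPolynomial.monomial (lmo lo g) (1 : K) :
          MvPolynomial (X × (Fin r → ℕ)) K)) '' {g | g ∈ G ∧ g ≠ 0}) =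
          ((fun n => (MvPolynomial.monomial n (1 : K) :
            MvPolynomial (X × (Fin r → ℕ)) K)) '' (lmo lo '' {g | g ∈ G ∧ g ≠ 0})) := by
        rw [← Set.image_comp]; rfl
      rw [lmIdeal, himg] at hmem
      obtain ⟨nn, hnn, hnle⟩ := mono_mem_span hmem
      obtain ⟨g, ⟨hgG, hg0⟩, rfl⟩ := hnn
      -- reduction step
      set c : K := lco lo f * (lco lo g)⁻¹ with hc
      have hcne : c ≠ 0 := mul_ne_zero (lco_ne_zero hf0) (inv_ne_zero (lco_ne_zero hg0))
      set A : MvPolynomial (X × (Fin r → ℕ)) K :=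
        MvPolynomial.monomial (lmo lo f - lmo lo g) c * g with hA
      have hAne : A ≠ 0 :=
        mul_ne_zero (by simpa [MvPolynomial.monomial_eq_zero] using hcne) hg0
      have hAlm : lmo lo A = lmo lo f := by
        rw [hA, lmo_mul h (by simpa [MvPolynomial.monomial_eq_zero] using hcne) hg0,
          lmo_monomial hcne, finsupp_tsub_add_cancel hnle]
      have hAlc : lco lo A = lco lo f := by
        rw [hA, lco_mul h (by simpa [MvPolynomial.monomial_eq_zero] using hcne) hg0,
          lco_monomial hcne, hc, mul_assoc, inv_mul_cancel₀ (lco_ne_zero hg0), mul_one]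
      have hArep : RepP lo G (fun a => oLE lo a (lmo lo f)) A := by
        rw [hA]
        refine RepP.single h hgG fun _ _ => ?_
        rw [lmo_monomial hcne, finsupp_tsub_add_cancel hnle]
        exact oLE_refl _
      have hfA : f = A + (f - A) := by ring
      rcases eq_or_ne (f - A) 0 with hfA0 | hfA0
      · rw [hgr_iff]
        have hthis : RepP lo G (fun a => oLE lo a (lmo lo f)) (A + (f - A)) := by
          rw [hfA0]
          exact hArep.add RepP.zero
        rwa [← hfA] at hthis
      · have hlt : oLT lo (lmo lo (f - A)) (lmo lo f) := by
          have := lmo_sub_lt h (p := f) (q := A) hAlm.symm hAlc.symm hfA0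
          exact this
        have hmemI : f - A ∈ I := I.sub_mem hfI (I.mul_mem_left _ (hGI hgG))
        have hrep' := IH (lmo lo (f - A)) (hflm ▸ hlt) (f - A) hmemI rfl
        rw [hgr_iff] at hrep' ⊢
        have hthis : RepP lo G (fun a => oLE lo a (lmo lo f)) (A + (f - A)) :=
          hArep.add (hrep'.mono fun a ha => oLE_trans ha (oLE_of_lt hlt))
        rwa [← hfA] at hthis
  exact fun f hf => main (lmo lo f) f hf rfl

end DivAux

section KeyAux
open MvPolynomial
variable {K : Type*} [Field K] {X : Type*} {r : ℕ}
  {lo : LinearOrder ((X × (Fin r → ℕ)) →₀ ℕ)}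
  {G : Set (MvPolynomial (X × (Fin r → ℕ)) K)}

theorem finsupp_le_add_left (a b : (X × (Fin r → ℕ)) →₀ ℕ) : b ≤ a + b := by
  rw [Finsupp.le_def]
  intro x
  simp only [Finsupp.add_apply]
  omega

theorem spoly_lmo_lt (h : IsMonOrd lo) {f g : MvPolynomial (X × (Fin r → ℕ)) K}
    (hf : f ≠ 0) (hg : g ≠ 0) (hs : spoly lo f g ≠ 0) :
    oLT lo (lmo lo (spoly lo f g)) (lcmMon (lmo lo f) (lmo lo g)) := by
  have hfc : (lco lo f)⁻¹ ≠ 0 := inv_ne_zero (lco_ne_zero hf)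
  have hgc : (lco lo g)⁻¹ ≠ 0 := inv_ne_zero (lco_ne_zero hg)
  have hAm : lmo lo (MvPolynomial.monomial (lcmMon (lmo lo f) (lmo lo g) - lmo lo f)
      (lco lo f)⁻¹ * f) = lcmMon (lmo lo f) (lmo lo g) := by
    rw [lmo_mul h (by simpa [MvPolynomial.monomial_eq_zero] using hfc) hf,
      lmo_monomial hfc, finsupp_tsub_add_cancel (le_lcmMon_left _ _)]
  have hBm : lmo lo (MvPolynomial.monomial (lcmMon (lmo lo f) (lmo lo g) - lmo lo g)
      (lco lo g)⁻¹ * g) = lcmMon (lmo lo f) (lmo lo g) := by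
    rw [lmo_mul h (by simpa [MvPolynomial.monomial_eq_zero] using hgc) hg,
      lmo_monomial hgc, finsupp_tsub_add_cancel (le_lcmMon_right _ _)]
  have hAc : lco lo (MvPolynomial.monomial (lcmMon (lmo lo f) (lmo lo g) - lmo lo f)
      (lco lo f)⁻¹ * f) = 1 := by
    rw [lco_mul h (by simpa [MvPolynomial.monomial_eq_zero] using hfc) hf,
      lco_monomial hfc, inv_mul_cancel₀ (lco_ne_zero hf)]
  have hBc : lco lo (MvPolynomial.monomial (lcmMon (lmo lo f) (lmo lo g) - lmo lo g)
      (lco lo g)⁻¹ * g) = 1 := by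
    rw [lco_mul h (by simpa [MvPolynomial.monomial_eq_zero] using hgc) hg,
      lco_monomial hgc, inv_mul_cancel₀ (lco_ne_zero hg)]
  have := lmo_sub_lt h (hAm.trans hBm.symm) (hAc.trans hBc.symm) hs
  rw [hAm] at this
  exact this

theorem exists_lmo_dvd (h : IsMonOrd lo)
    (hS : ∀ f ∈ G, ∀ g ∈ G, f ≠ 0 → g ≠ 0 → HasGroebnerRep lo G (spoly lo f g))
    {f : MvPolynomial (X × (Fin r → ℕ)) K} (hf : f ≠ 0) (hfI : f ∈ Ideal.span G) :
    ∃ g ∈ G, g ≠ 0 ∧ lmo lo g ≤ lmo lo f := by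
  classical
  obtain ⟨δ₀, hrep₀⟩ := exists_bound_of_mem_span (lo := lo) hf hfI
  have main : ∀ δ : (X × (Fin r → ℕ)) →₀ ℕ, RepP lo G (fun a => oLE lo a δ) f →
      ∃ g ∈ G, g ≠ 0 ∧ lmo lo g ≤ lmo lo f := by
    intro δ
    induction δ using (h.wf).induction with
    | _ δ IH =>
      intro hrep
      obtain ⟨n, q, g, hg, hsum, hB⟩ := hrep
      have hlmf : oLE lo (lmo lo f) δ := by
        rw [hsum]
        exact lmo_sum_le h fun i _ => lmo_mul_le h fun h1 h2 => hB i h1 h2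
      by_cases hcf : MvPolynomial.coeff δ f ≠ 0
      · -- here δ = lmo f and some term attains it
        have hδf : δ = lmo lo f := oLE_antisymm (le_lmo (MvPolynomial.mem_support_iff.2 hcf)) hlmf
        have hcs : MvPolynomial.coeff δ f = ∑ i, MvPolynomial.coeff δ (q i * g i) := by
          rw [hsum, MvPolynomial.coeff_sum]
        have hex : ∃ i, MvPolynomial.coeff δ (q i * g i) ≠ 0 := by
          by_contra hno
          push_neg at hno
          rw [hcs, Finset.sum_eq_zero fun i _ => hno i] at hcf
          exact hcf rfl
        obtain ⟨i, hi⟩ := hex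
        have hqi : q i ≠ 0 := fun h0 => hi (by rw [h0, zero_mul, MvPolynomial.coeff_zero])
        have hgi : g i ≠ 0 := fun h0 => hi (by rw [h0, mul_zero, MvPolynomial.coeff_zero])
        have hδi : δ = lmo lo (q i) + lmo lo (g i) := by
          apply oLE_antisymm
          · have := le_lmo (lo := lo) (MvPolynomial.mem_support_iff.2 hi)
            rwa [lmo_mul h hqi hgi] at this
          · exact hB i hqi hgi
        refine ⟨g i, hg i, hgi, ?_⟩
        rw [← hδf, hδi]
        exact finsupp_le_add_left _ _
      · push_neg at hcf
        -- cancellation case: build a representation with strictly smaller bound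
        set T : Finset (Fin n) := Finset.univ.filter
          (fun i => q i ≠ 0 ∧ g i ≠ 0 ∧ lmo lo (q i) + lmo lo (g i) = δ) with hT
        have hmemT : ∀ i, i ∈ T ↔ q i ≠ 0 ∧ g i ≠ 0 ∧ lmo lo (q i) + lmo lo (g i) = δ := by
          intro i
          rw [hT, Finset.mem_filter]
          simp
        -- the truncated quotients
        set q' : Fin n → MvPolynomial (X × (Fin r → ℕ)) K := fun i =>
          if i ∈ T then q i - MvPolynomial.monomial (lmo lo (q i)) (lco lo (q i)) else q i
          with hq'
        have hlow : RepP lo G (fun a => oLT lo a δ) (∑ i, q' i * g i) := by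
          refine ⟨n, q', g, hg, rfl, ?_⟩
          intro i hq'0 hg0
          by_cases hiT : i ∈ T
          · obtain ⟨hqi0, hgi0, hδi⟩ := (hmemT i).1 hiT
            have hq'i : q' i = q i - MvPolynomial.monomial (lmo lo (q i)) (lco lo (q i)) := by
              rw [hq']; simp only [if_pos hiT]
            have hlt : oLT lo (lmo lo (q' i)) (lmo lo (q i)) := by
              rw [hq'i]
              exact lmo_sub_lt h (lmo_monomial (lco_ne_zero hqi0)).symm
                (lco_monomial (lco_ne_zero hqi0)).symm (hq'i ▸ hq'0)
            rw [← hδi]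
            exact oLT_add_right h _ hlt
          · have hq'i : q' i = q i := by rw [hq']; simp only [if_neg hiT]
            rw [hq'i] at hq'0 ⊢
            have hne : lmo lo (q i) + lmo lo (g i) ≠ δ := by
              intro heq
              exact hiT ((hmemT i).2 ⟨hq'0, hg0, heq⟩)
            exact oLT_of_le_ne (hB i hq'0 hg0) hne
        -- splitting f
        have hsplit : f = (∑ i, q' i * g i) +
            ∑ i ∈ T, MvPolynomial.monomial (lmo lo (q i)) (lco lo (q i)) * g i := by
          rw [hsum]
          have hterm : ∀ i : Fin n, q i * g i = q' i * g i +
              (if i ∈ T then MvPolynomial.monomial (lmo lo (q i)) (lco lo (q i)) else 0) * g i := by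
            intro i
            by_cases hiT : i ∈ T
            · rw [hq']; simp only [if_pos hiT]; ring
            · rw [hq']; simp only [if_neg hiT]; ring
          rw [Finset.sum_congr rfl fun i _ => hterm i, Finset.sum_add_distrib]
          congr 1
          rw [hT, Finset.sum_filter]
          apply Finset.sum_congr rfl
          intro i _
          simp only [Finset.mem_filter, Finset.mem_univ, true_and]
          by_cases hp : q i ≠ 0 ∧ g i ≠ 0 ∧ lmo lo (q i) + lmo lo (g i) = δ
          · rw [if_pos hp, if_pos hp]
          · rw [if_neg hp, if_neg hp, zero_mul]
        -- leading coefficients cancel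
        have hctop : ∑ i ∈ T, lco lo (q i) * lco lo (g i) = 0 := by
          have h0 : (0 : K) = ∑ i, MvPolynomial.coeff δ (q i * g i) := by
            rw [← hcf, hsum, MvPolynomial.coeff_sum]
          have h1 : ∑ i, MvPolynomial.coeff δ (q i * g i) =
              ∑ i ∈ T, MvPolynomial.coeff δ (q i * g i) := by
            symm
            apply Finset.sum_subset (Finset.subset_univ T)
            intro i _ hiT
            rcases eq_or_ne (q i) 0 with h0' | hqi0
            · rw [h0', zero_mul, MvPolynomial.coeff_zero]
            rcases eq_or_ne (g i) 0 with h0' | hgi0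
            · rw [h0', mul_zero, MvPolynomial.coeff_zero]
            have hne : lmo lo (q i) + lmo lo (g i) ≠ δ := by
              intro heq
              exact hiT ((hmemT i).2 ⟨hqi0, hgi0, heq⟩)
            apply coeff_eq_zero_of_lmo_lt
            rw [lmo_mul h hqi0 hgi0]
            exact oLT_of_le_ne (hB i hqi0 hgi0) hne
          have h2 : ∑ i ∈ T, MvPolynomial.coeff δ (q i * g i) =
              ∑ i ∈ T, lco lo (q i) * lco lo (g i) := by
            apply Finset.sum_congr rfl
            intro i hiT
            obtain ⟨hqi0, hgi0, hδi⟩ := (hmemT i).1 hiT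
            rw [← hδi, coeff_mul_lmo_add_lmo h]
          rw [h1, h2] at h0
          exact h0.symm
        -- the top part has a strict representation via S-polynomials
        have htop : RepP lo G (fun a => oLT lo a δ)
            (∑ i ∈ T, MvPolynomial.monomial (lmo lo (q i)) (lco lo (q i)) * g i) := by
          rcases T.eq_empty_or_nonempty with hTe | ⟨a, haT⟩
          · rw [hTe, Finset.sum_empty]
            exact RepP.zero
          obtain ⟨hqa0, hga0, hδa⟩ := (hmemT a).1 haT
          have hlt_eq : ∀ i ∈ T, MvPolynomial.monomial (lmo lo (q i)) (lco lo (q i)) * g i =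
              (lco lo (q i) * lco lo (g i)) •
                (MvPolynomial.monomial (lmo lo (q i)) ((lco lo (g i))⁻¹) * g i) := by
            intro i hiT
            obtain ⟨hqi0, hgi0, _⟩ := (hmemT i).1 hiT
            rw [MvPolynomial.smul_eq_C_mul, ← mul_assoc, MvPolynomial.C_mul_monomial,
              mul_assoc, mul_inv_cancel₀ (lco_ne_zero hgi0), mul_one]
          have htele : ∑ i ∈ T, MvPolynomial.monomial (lmo lo (q i)) (lco lo (q i)) * g i =
              ∑ i ∈ T, (lco lo (q i) * lco lo (g i)) •
                ((MvPolynomial.monomial (lmo lo (q i)) ((lco lo (g i))⁻¹) * g i) -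
                 (MvPolynomial.monomial (lmo lo (q a)) ((lco lo (g a))⁻¹) * g a)) := by
            rw [Finset.sum_congr rfl hlt_eq]
            simp only [smul_sub, Finset.sum_sub_distrib, ← Finset.sum_smul, hctop, zero_smul,
              sub_zero]
          rw [htele]
          apply RepP.sum
          intro i hiT
          apply RepP.smul h
          obtain ⟨hqi0, hgi0, hδi⟩ := (hmemT i).1 hiT
          -- the difference is a shifted S-polynomial
          have hgiδ : lmo lo (g i) ≤ δ := by rw [← hδi]; exact finsupp_le_add_left _ _
          have hgaδ : lmo lo (g a) ≤ δ := by rw [← hδa]; exact finsupp_le_add_left _ _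
          have hγδ : lcmMon (lmo lo (g i)) (lmo lo (g a)) ≤ δ := lcmMon_le hgiδ hgaδ
          have hqiδ : lmo lo (q i) = δ - lmo lo (g i) := by rw [← hδi, finsupp_add_tsub]
          have hqaδ : lmo lo (q a) = δ - lmo lo (g a) := by rw [← hδa, finsupp_add_tsub]
          have hident : (MvPolynomial.monomial (lmo lo (q i)) ((lco lo (g i))⁻¹) * g i) -
              (MvPolynomial.monomial (lmo lo (q a)) ((lco lo (g a))⁻¹) * g a) =
              MvPolynomial.monomial (δ - lcmMon (lmo lo (g i)) (lmo lo (g a))) (1 : K) *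
                spoly lo (g i) (g a) := by
            rw [spoly, mul_sub, ← mul_assoc, ← mul_assoc, MvPolynomial.monomial_mul,
              MvPolynomial.monomial_mul, one_mul, one_mul,
              finsupp_tsub_tsub (le_lcmMon_left _ _) hγδ,
              finsupp_tsub_tsub (le_lcmMon_right _ _) hγδ, hqiδ, hqaδ]
          rw [hident]
          rcases eq_or_ne (spoly lo (g i) (g a)) 0 with hs0 | hs0
          · rw [hs0, mul_zero]
            exact RepP.zero
          · have hrep := hgr_iff.1 (hS (g i) (hg i) (g a) (hg a) hgi0 hga0)
            refine RepP.mul_monomial h (fun b hb => ?_) hrep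
            have h1 : oLE lo ((δ - lcmMon (lmo lo (g i)) (lmo lo (g a))) + b)
                ((δ - lcmMon (lmo lo (g i)) (lmo lo (g a))) + lmo lo (spoly lo (g i) (g a))) :=
              oLE_add_left h _ hb
            have h2 : oLT lo ((δ - lcmMon (lmo lo (g i)) (lmo lo (g a))) +
                lmo lo (spoly lo (g i) (g a)))
                ((δ - lcmMon (lmo lo (g i)) (lmo lo (g a))) +
                  lcmMon (lmo lo (g i)) (lmo lo (g a))) :=
              h.add_lt _ _ _ (spoly_lmo_lt h hgi0 hga0 hs0)
            rw [finsupp_tsub_add_cancel hγδ] at h2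
            exact oLT_of_le_of_lt h1 h2
        -- conclude by minimality
        have hfrep : RepP lo G (fun a => oLT lo a δ) f := by
          rw [hsplit]
          exact hlow.add htop
        obtain ⟨ε, hεδ, hrepε⟩ := RepP.exists_le_of_lt hf hfrep
        exact IH ε hεδ hrepε
  exact main δ₀ hrep₀

end KeyAux

/-- **Buchberger's criterion.** Let `P` be endowed with a monomial
ordering and let `G` be a (possibly infinite) generating set of an ideal `I ⊆ P`.
Then `G` is a Gröbner basis of `I` if and only if for all nonzero `f, g ∈ G` the
S-polynomial `spoly(f,g)` has a Gröbner representation with respect to `G`. -/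
theorem statement_8 {K : Type*} [Field K] {X : Type*} [Countable X] {r : ℕ}
    (lo : LinearOrder ((X × (Fin r → ℕ)) →₀ ℕ)) (h : IsMonOrd lo)
    (I : Ideal (MvPolynomial (X × (Fin r → ℕ)) K))
    (G : Set (MvPolynomial (X × (Fin r → ℕ)) K))
    (hGen : I = Ideal.span G) :
    IsGBasis lo G I ↔
      ∀ f ∈ G, ∀ g ∈ G, f ≠ 0 → g ≠ 0 → HasGroebnerRep lo G (spoly lo f g) := by
  constructor
  · rintro ⟨hGI, hlm⟩ f hfG g hgG hf0 hg0
    have hsI : spoly lo f g ∈ I := by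
      rw [spoly]
      exact I.sub_mem (I.mul_mem_left _ (hGI hfG)) (I.mul_mem_left _ (hGI hgG))
    exact rep_of_mem h hlm hGI _ hsI
  · intro hS
    have hGI : G ⊆ ↑I := by
      rw [hGen]
      exact Ideal.subset_span
    refine ⟨hGI, le_antisymm ?_ ?_⟩
    · apply Ideal.span_le.2
      rintro p ⟨f, ⟨hfI, hf0⟩, rfl⟩
      have hfspan : f ∈ Ideal.span G := by rwa [hGen] at hfI
      obtain ⟨g, hgG, hg0, hle⟩ := exists_lmo_dvd h hS hf0 hfspan
      have heq : (MvPolynomial.monomial (lmo lo f) (1 : K) :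
          MvPolynomial (X × (Fin r → ℕ)) K) =
          MvPolynomial.monomial (lmo lo f - lmo lo g) (1 : K) *
            MvPolynomial.monomial (lmo lo g) (1 : K) := by
        rw [MvPolynomial.monomial_mul, one_mul, finsupp_tsub_add_cancel hle]
      show (MvPolynomial.monomial (lmo lo f)) (1 : K) ∈ lmIdeal lo G
      rw [heq]
      exact Ideal.mul_mem_left _ _ (Ideal.subset_span ⟨g, ⟨hgG, hg0⟩, rfl⟩)
    · apply Ideal.span_mono
      apply Set.image_mono
      intro g hg
      exact ⟨hGI hg.1, hg.2⟩
end
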